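/- Let G be a finite simple bipartite graph on n vertices and, for each nonnegative even integer i, let f_i = b_i − (−1)^{i/2} a_i, where a_i and b_i are the coefficients of x^{n−i} in φ(G,x) = det(xI − A(G)) and π(G,x) = per(xI − A(G)), respectively. If f_i = 0 for every even i, then G is C_{4k}-free, i.e., G contains no cycle whose length is divisible by 4. -/

import Mathlib

open Polynomial SimpleGraph
open scoped Classical

noncomputable section

/-- The adjacency matrix of a simple graph `G`, with entries in `R`. -/
def adjMat (R : Type*) [Zero R] [One R] {V : Type*} [Fintype V] (G : SimpleGraph V) :
    Matrix V V R := fun u v => if G.Adj u v then 1 else 0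

/-- The characteristic polynomial `det (xI - A(G))` of a simple graph `G`. -/
def charPolyG (R : Type*) [CommRing R] {V : Type*} [Fintype V] (G : SimpleGraph V) : R[X] :=
  (adjMat R G).charpoly

/-- The permanental polynomial `per (xI - A(G))` of a simple graph `G`. -/
def permPolyG (R : Type*) [CommRing R] {V : Type*} [Fintype V] (G : SimpleGraph V) : R[X] :=
  (Matrix.charmatrix (adjMat R G)).permanent

/-- The modified characteristic polynomial `φ_p(G,x) = ∑_{i even} (-1)^{i/2} a_i x^{n-i}`
of a (bipartite) graph `G` on `n` vertices, where `a_i` is the coefficient of `x^{n-i}`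
in the characteristic polynomial. -/
def phiP {V : Type*} [Fintype V] (G : SimpleGraph V) : ℝ[X] :=
  ∑ i ∈ Finset.range (Fintype.card V + 1),
    if Even i then
      C ((-1 : ℝ) ^ (i / 2) * (charPolyG ℝ G).coeff (Fintype.card V - i)) *
        X ^ (Fintype.card V - i)
    else 0

/-- `G` contains no cycle whose length is divisible by 4. -/
def C4kFree {V : Type*} (G : SimpleGraph V) : Prop :=
  ¬ ∃ (v : V) (c : G.Walk v v), c.IsCycle ∧ 4 ∣ c.length

/-- `G` is `4k`-intercyclic: it contains no two vertex-disjoint cycles,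
each of length divisible by 4. -/
def Intercyclic4k {V : Type*} (G : SimpleGraph V) : Prop :=
  ¬ ∃ (u v : V) (c : G.Walk u u) (d : G.Walk v v),
      c.IsCycle ∧ d.IsCycle ∧ 4 ∣ c.length ∧ 4 ∣ d.length ∧
      ∀ x, x ∈ c.support → x ∉ d.support

/-- A subgraph `R` of `G` is a cycle of `G` if it is the subgraph traced by some cycle walk. -/
def IsCycleSubgraph {V : Type*} (G : SimpleGraph V) (R : G.Subgraph) : Prop :=
  ∃ (v : V) (c : G.Walk v v), c.IsCycle ∧ R = c.toSubgraph

/-- The set of all `4k`-cycles (cycles of length divisible by 4) of `G`,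
viewed as subgraphs. -/
def cycles4k {V : Type*} (G : SimpleGraph V) : Set G.Subgraph :=
  {R | ∃ (v : V) (c : G.Walk v v), c.IsCycle ∧ 4 ∣ c.length ∧ R = c.toSubgraph}

/-- The connected component `c` of the subgraph `H` is a single edge (a `K₂`). -/
def IsEdgeComp {V : Type*} {G : SimpleGraph V} (H : G.Subgraph)
    (c : H.coe.ConnectedComponent) : Prop :=
  ∃ x y : H.verts, H.coe.Adj x y ∧ c.supp = {x, y}

/-- The connected component `c` of the subgraph `H` is a cycle: there is a cycle walk whose
support is exactly `c` and which uses every edge of `H` inside `c`. -/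
def IsCycleComp {V : Type*} {G : SimpleGraph V} (H : G.Subgraph)
    (c : H.coe.ConnectedComponent) : Prop :=
  ∃ (v : H.verts) (w : H.coe.Walk v v), w.IsCycle ∧
    {x | x ∈ w.support} = c.supp ∧
    ∀ x y : H.verts, H.coe.Adj x y → x ∈ c.supp → w.toSubgraph.Adj x y

/-- A Sachs subgraph of `G`: a subgraph each of whose connected components is either
a single edge or a cycle. -/
def IsSachs {V : Type*} {G : SimpleGraph V} (H : G.Subgraph) : Prop :=
  ∀ c : H.coe.ConnectedComponent, IsEdgeComp H c ∨ IsCycleComp H c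

/-- The number of connected components of the subgraph `H`. -/
def pCount {V : Type*} {G : SimpleGraph V} (H : G.Subgraph) : ℕ :=
  Nat.card H.coe.ConnectedComponent

/-- The number of components of `H` that are cycles of length divisible by 4. -/
def sCount {V : Type*} {G : SimpleGraph V} (H : G.Subgraph) : ℕ :=
  Set.ncard {c : H.coe.ConnectedComponent | IsCycleComp H c ∧ c.supp.ncard % 4 = 0}

/-- The number of components of `H` that are cycles of length congruent to 2 mod 4. -/
def tCount {V : Type*} {G : SimpleGraph V} (H : G.Subgraph) : ℕ :=
  Set.ncard {c : H.coe.ConnectedComponent | IsCycleComp H c ∧ c.supp.ncard % 4 = 2}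

/-- The number of components of `H` that are cycles. -/
def cycCount {V : Type*} {G : SimpleGraph V} (H : G.Subgraph) : ℕ :=
  Set.ncard {c : H.coe.ConnectedComponent | IsCycleComp H c}

/-- `R` is a union of connected components of `H`. -/
def IsComponentUnion {V : Type*} {G : SimpleGraph V} (R H : G.Subgraph) : Prop :=
  R ≤ H ∧ ∀ x y, H.Adj x y → x ∈ R.verts → R.Adj x y



lemma prod_charmatrix {V : Type*} [Fintype V] (G : SimpleGraph V) (σ : Equiv.Perm V) :
    (∏ i, Matrix.charmatrix (adjMat ℝ G) (σ i) i) =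
      C (∏ i ∈ σ.support, (-(adjMat ℝ G (σ i) i))) *
        X ^ (Fintype.card V - σ.support.card) := by
  rw [← Finset.prod_mul_prod_compl σ.support]
  congr 1
  · rw [map_prod]
    apply Finset.prod_congr rfl
    intro i hi
    rw [Matrix.charmatrix_apply_ne _ _ _ (Equiv.Perm.mem_support.mp hi), map_neg]
  · rw [← Finset.card_compl]
    rw [← Finset.prod_const]
    apply Finset.prod_congr rfl
    intro i hi
    have hfix : σ i = i := by simpa using (Equiv.Perm.notMem_support.mp (Finset.mem_compl.mp hi))
    rw [hfix, Matrix.charmatrix_apply_eq]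
    have : adjMat ℝ G i i = 0 := by simp [adjMat]
    rw [this, map_zero, sub_zero]

lemma coeff_sub_eq {V : Type*} [Fintype V] (G : SimpleGraph V) (ℓ : ℕ) (hl : ℓ ≤ Fintype.card V) :
    (permPolyG ℝ G).coeff (Fintype.card V - ℓ) - (charPolyG ℝ G).coeff (Fintype.card V - ℓ) =
      ∑ σ : Equiv.Perm V,
        (1 - ((Equiv.Perm.sign σ : ℤ) : ℝ)) *
          (if σ.support.card = ℓ then ∏ i ∈ σ.support, (-(adjMat ℝ G (σ i) i)) else 0) := by
  rw [permPolyG, charPolyG, Matrix.charpoly, Matrix.permanent, Matrix.det_apply,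
    Polynomial.finset_sum_coeff, Polynomial.finset_sum_coeff, ← Finset.sum_sub_distrib]
  apply Finset.sum_congr rfl
  intro σ _
  rw [prod_charmatrix, Polynomial.coeff_smul, Polynomial.coeff_C_mul,
    Polynomial.coeff_X_pow]
  have hcard : σ.support.card ≤ Fintype.card V := by
    simpa using Finset.card_le_card (Finset.subset_univ σ.support)
  have : (Fintype.card V - ℓ = Fintype.card V - σ.support.card) ↔ (σ.support.card = ℓ) := by
    omega
  by_cases h : σ.support.card = ℓ
  · rw [if_pos (this.mpr h), if_pos h]
    rcases Int.units_eq_one_or (Equiv.Perm.sign σ) with hs | hs <;>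
      simp [hs, zsmul_eq_mul] <;> ring
  · rw [if_neg (fun hh => h (this.mp hh)), if_neg h]
    simp

lemma getElem_idx_congr {α : Type*} (l : List α) {i j : ℕ} (h : i = j) (hi : i < l.length) :
    l[i]'hi = l[j]'(h ▸ hi) := by subst h; rfl


section walkstuff
variable {V : Type*} {G : SimpleGraph V}

lemma walk_adj_getElem {u : V} (c : G.Walk u u) (i : ℕ) (h : i + 1 < c.support.length) :
    G.Adj (c.support[i]'(by omega)) (c.support[i+1]'h) := by
  have hch := c.isChain_adj_support
  rw [List.isChain_iff_getElem] at hch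
  exact hch i (by omega)

lemma dropLast_support_nodup {u : V} (c : G.Walk u u) (hc : c.IsCycle) :
    c.support.dropLast.Nodup := by
  have htail : c.support.tail.Nodup := hc.support_nodup
  have hne : c.support.tail ≠ [] := by
    have h3 := hc.three_le_length
    have hlen : c.support.length = c.length + 1 := c.length_support
    intro h
    have h0 : c.support.tail.length = 0 := by rw [h]; rfl
    rw [List.length_tail, hlen] at h0
    omega
  have hsupp : c.support = u :: c.support.tail := c.support_eq_cons
  have hgl : c.support.tail.getLast hne = u := by
    rw [List.getLast_tail]
    exact c.getLast_support
  have hdl : c.support.dropLast = u :: c.support.tail.dropLast := by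
    conv_lhs => rw [hsupp]
    exact List.dropLast_cons_of_ne_nil hne
  rw [hdl, List.nodup_cons]
  constructor
  · intro hmem
    have hsplit := List.dropLast_append_getLast hne
    rw [hgl] at hsplit
    rw [← hsplit] at htail
    exact List.disjoint_of_nodup_append htail hmem (by simp)
  · exact htail.sublist (List.dropLast_sublist _)

lemma dropLast_support_length {u : V} (c : G.Walk u u) :
    c.support.dropLast.length = c.length := by
  rw [List.length_dropLast, c.length_support]
  omega

lemma adj_formPerm {u : V} (c : G.Walk u u) (hc : c.IsCycle) {x : V}
    (hx : x ∈ c.support.dropLast) :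
    G.Adj (c.support.dropLast.formPerm x) x := by
  have hnodup := dropLast_support_nodup c hc
  have hlen : c.support.dropLast.length = c.length := dropLast_support_length c
  have h3 := hc.three_le_length
  have hslen : c.support.length = c.length + 1 := c.length_support
  obtain ⟨i, hi, rfl⟩ := List.getElem_of_mem hx
  rw [List.formPerm_apply_getElem _ hnodup i hi]
  by_cases hcase : i + 1 < c.support.dropLast.length
  · rw [getElem_idx_congr _ (Nat.mod_eq_of_lt hcase)]
    simp only [List.getElem_dropLast]
    exact (walk_adj_getElem c i (by omega)).symm
  · have hi1 : i + 1 = c.support.dropLast.length := by omega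
    have hmod : (i + 1) % c.support.dropLast.length = 0 := by rw [hi1, Nat.mod_self]
    rw [getElem_idx_congr _ hmod]
    simp only [List.getElem_dropLast]
    have h0 : c.support[0]'(by omega) = u := by
      rw [List.getElem_zero]
      exact c.head_support
    have hlast : c.support[c.length]'(by omega) = u := by
      have hg := c.getLast_support
      rw [List.getLast_eq_getElem] at hg
      rw [getElem_idx_congr _ (show c.support.length - 1 = c.length by omega)] at hg
      exact hg
    rw [h0]
    have hadj := walk_adj_getElem c i (by omega)
    rw [getElem_idx_congr _ (show i + 1 = c.length by omega), hlast] at hadj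
    exact hadj.symm
end walkstuff

lemma adjMat_nonneg {V : Type*} [Fintype V] (G : SimpleGraph V) (u v : V) :
    0 ≤ adjMat ℝ G u v := by
  unfold adjMat; split <;> norm_num


/-- For a bipartite graph `G` on `n` vertices, if
`f_i = b_i - (-1)^{i/2} a_i = 0` for every even `i`, then `G` contains no cycle of length
divisible by 4. -/
theorem stmt_15 {V : Type*} [Fintype V] (G : SimpleGraph V) (hbip : G.Colorable 2)
    (hf : ∀ i ≤ Fintype.card V, Even i →
      (permPolyG ℝ G).coeff (Fintype.card V - i)
        - (-1 : ℝ) ^ (i / 2) * (charPolyG ℝ G).coeff (Fintype.card V - i) = 0) :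
    C4kFree G := by
  rintro ⟨v, c, hcyc, hdvd⟩
  obtain ⟨k, hk⟩ := hdvd
  set l := c.support.dropLast with hl
  have hnodup : l.Nodup := dropLast_support_nodup c hcyc
  have hlen : l.length = c.length := dropLast_support_length c
  have h3 := hcyc.three_le_length
  have hle : c.length ≤ Fintype.card V := by rw [← hlen]; exact hnodup.length_le_card
  have heven : Even c.length := ⟨2 * k, by omega⟩
  set σ := l.formPerm with hσ
  have hne1 : ∀ x : V, l ≠ [x] := by
    intro x h
    rw [h] at hlen
    simp at hlen
    omega
  have hsupp : σ.support = l.toFinset := List.support_formPerm_of_nodup l hnodup hne1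
  have hcard : σ.support.card = c.length := by
    rw [hsupp, List.card_toFinset, hnodup.dedup, hlen]
  have hcycσ : σ.IsCycle := List.isCycle_formPerm hnodup (by omega)
  have hsign : Equiv.Perm.sign σ = -1 := by
    rw [hcycσ.sign, hcard, (Even.neg_one_pow heven : ((-1 : ℤˣ)) ^ c.length = 1)]
  have key := hf c.length hle heven
  have h14 : ((-1 : ℝ)) ^ (c.length / 2) = 1 := Even.neg_one_pow ⟨k, by omega⟩
  rw [h14, one_mul, coeff_sub_eq G c.length hle] at key
  -- each summand is nonneg
  have hnonneg : ∀ τ : Equiv.Perm V,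
      0 ≤ (1 - ((Equiv.Perm.sign τ : ℤ) : ℝ)) *
        (if τ.support.card = c.length then
          ∏ i ∈ τ.support, (-(adjMat ℝ G (τ i) i)) else 0) := by
    intro τ
    apply mul_nonneg
    · rcases Int.units_eq_one_or (Equiv.Perm.sign τ) with hs | hs <;> rw [hs] <;> norm_num
    · split
      case isTrue h =>
        have : (∏ i ∈ τ.support, (-(adjMat ℝ G (τ i) i)))
            = (-1 : ℝ) ^ τ.support.card * ∏ i ∈ τ.support, adjMat ℝ G (τ i) i := by
          calc (∏ i ∈ τ.support, (-(adjMat ℝ G (τ i) i)))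
              = ∏ i ∈ τ.support, ((-1 : ℝ) * adjMat ℝ G (τ i) i) := by
                simp only [neg_one_mul]
            _ = (∏ _i ∈ τ.support, (-1 : ℝ)) * ∏ i ∈ τ.support, adjMat ℝ G (τ i) i :=
                Finset.prod_mul_distrib
            _ = (-1 : ℝ) ^ τ.support.card * ∏ i ∈ τ.support, adjMat ℝ G (τ i) i := by
                rw [Finset.prod_const]
        rw [this, h, Even.neg_one_pow heven, one_mul]
        exact Finset.prod_nonneg fun i _ => adjMat_nonneg G _ _
      case isFalse h => exact le_refl 0
  -- the term at σ is 2
  have hterm : (1 - ((Equiv.Perm.sign σ : ℤ) : ℝ)) *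
      (if σ.support.card = c.length then
        ∏ i ∈ σ.support, (-(adjMat ℝ G (σ i) i)) else 0) = 2 := by
    rw [if_pos hcard, hsign]
    have hprod : ∏ i ∈ σ.support, (-(adjMat ℝ G (σ i) i)) = (-1 : ℝ) ^ c.length := by
      rw [← hcard, ← Finset.prod_const]
      apply Finset.prod_congr rfl
      intro i hi
      have hmem : i ∈ l := by
        rw [hsupp] at hi
        exact List.mem_toFinset.mp hi
      have hadj : G.Adj (σ i) i := adj_formPerm c hcyc hmem
      unfold adjMat
      rw [if_pos hadj]
    rw [hprod, Even.neg_one_pow heven]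
    norm_num
  have hle2 : (1 - ((Equiv.Perm.sign σ : ℤ) : ℝ)) *
      (if σ.support.card = c.length then
        ∏ i ∈ σ.support, (-(adjMat ℝ G (σ i) i)) else 0)
      ≤ ∑ τ : Equiv.Perm V,
        (1 - ((Equiv.Perm.sign τ : ℤ) : ℝ)) *
          (if τ.support.card = c.length then
            ∏ i ∈ τ.support, (-(adjMat ℝ G (τ i) i)) else 0) :=
    Finset.single_le_sum (fun τ _ => hnonneg τ) (Finset.mem_univ σ)
  rw [key, hterm] at hle2
  linarith

end
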